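/- For every 1 ≤ i ≤ k, the column space of P_{1:i} equals the column space of J_{1:i}ᵀ. Consequently, range(J_{1:i}ᵀ) = range(J_{1:i−1}ᵀ) + range(P_i), and range(J_{1:i−1}ᵀ) is orthogonal to range(P_i), i.e., xᵀy = 0 for every x ∈ range(J_{1:i−1}ᵀ) and y ∈ range(P_i). -/

import Mathlib

open Matrix

section Helpers

variable {l n : Type*} [Fintype l] [Fintype n] [DecidableEq n]

set_option linter.unusedSectionVars false

private lemma hmulVec_ext (A B : Matrix l n ℝ) (h : ∀ x, A *ᵥ x = B *ᵥ x) : A = B := by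
  ext i j
  have := congrFun (h (Pi.single j 1)) i
  simpa using this

private lemma hidem_mem (Q : Matrix n n ℝ) (hQ : Q * Q = Q) (x : n → ℝ) :
    x ∈ LinearMap.range Q.mulVecLin ↔ Q *ᵥ x = x := by
  constructor
  · rintro ⟨y, rfl⟩
    simp only [mulVecLin_apply, mulVec_mulVec, hQ]
  · intro h
    exact ⟨x, h⟩

private lemma hpen_range (A : Matrix l n ℝ) (Ap : Matrix n l ℝ)
    (h1 : A * Ap * A = A) (h4 : (Ap * A)ᵀ = Ap * A) :
    LinearMap.range (Ap * A).mulVecLin = LinearMap.range Aᵀ.mulVecLin := by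
  apply le_antisymm
  · rintro _ ⟨x, rfl⟩
    refine ⟨Apᵀ *ᵥ x, ?_⟩
    simp only [mulVecLin_apply, mulVec_mulVec]
    rw [← transpose_mul, h4]
  · rintro _ ⟨x, rfl⟩
    refine ⟨Aᵀ *ᵥ x, ?_⟩
    simp only [mulVecLin_apply, mulVec_mulVec]
    have : (Ap * A) * Aᵀ = Aᵀ := by
      calc (Ap * A) * Aᵀ = (Ap * A)ᵀ * Aᵀ := by rw [h4]
      _ = (A * (Ap * A))ᵀ := (transpose_mul A (Ap * A)).symm
      _ = Aᵀ := by rw [← Matrix.mul_assoc, h1]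
    rw [this]

private lemma hsum_range (Q R : Matrix n n ℝ) (hQ : Q * Q = Q) (hR : R * R = R)
    (hQR : Q * R = 0) (hRQ : R * Q = 0) :
    LinearMap.range (Q + R).mulVecLin =
      LinearMap.range Q.mulVecLin ⊔ LinearMap.range R.mulVecLin := by
  apply le_antisymm
  · rintro _ ⟨x, rfl⟩
    simp only [mulVecLin_apply, add_mulVec]
    exact Submodule.add_mem_sup ⟨x, rfl⟩ ⟨x, rfl⟩
  · rw [sup_le_iff]
    constructor
    · rintro _ ⟨x, rfl⟩
      refine ⟨Q *ᵥ x, ?_⟩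
      simp only [mulVecLin_apply, mulVec_mulVec, add_mul, hQ, hRQ, add_zero]
    · rintro _ ⟨x, rfl⟩
      refine ⟨R *ᵥ x, ?_⟩
      simp only [mulVecLin_apply, mulVec_mulVec, add_mul, hR, hQR, zero_add]

private lemma hsup_shift (Q : Matrix n n ℝ) (B : Matrix n l ℝ) :
    LinearMap.range Q.mulVecLin ⊔ LinearMap.range (((1 : Matrix n n ℝ) - Q) * B).mulVecLin =
      LinearMap.range Q.mulVecLin ⊔ LinearMap.range B.mulVecLin := by
  apply le_antisymm <;> rw [sup_le_iff] <;>
    refine ⟨le_sup_left, ?_⟩ <;> rintro _ ⟨x, rfl⟩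
  · have h : ((1 - Q) * B) *ᵥ x = (B *ᵥ x) - Q *ᵥ (B *ᵥ x) := by
      rw [Matrix.sub_mul, Matrix.one_mul, Matrix.sub_mulVec, mulVec_mulVec]
    simp only [mulVecLin_apply, h]
    exact Submodule.sub_mem _ (Submodule.mem_sup_right ⟨x, rfl⟩)
      (Submodule.mem_sup_left ⟨B *ᵥ x, rfl⟩)
  · have h : B *ᵥ x = Q *ᵥ (B *ᵥ x) + ((1 - Q) * B) *ᵥ x := by
      rw [Matrix.sub_mul, Matrix.one_mul, Matrix.sub_mulVec, mulVec_mulVec]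
      abel
    simp only [mulVecLin_apply]
    rw [h]
    exact Submodule.add_mem _ (Submodule.mem_sup_left ⟨B *ᵥ x, rfl⟩)
      (Submodule.mem_sup_right ⟨x, rfl⟩)

private lemma hproj_eq (A B : Matrix n n ℝ) (hAs : Aᵀ = A) (hBs : Bᵀ = B)
    (hA : A * A = A) (hB : B * B = B)
    (h : LinearMap.range A.mulVecLin = LinearMap.range B.mulVecLin) : A = B := by
  have hAB : A * B = B := by
    apply hmulVec_ext
    intro x
    rw [← mulVec_mulVec]
    exact (hidem_mem A hA _).mp (h ▸ (⟨x, rfl⟩ : B *ᵥ x ∈ LinearMap.range B.mulVecLin))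
  have hBA : B * A = A := by
    apply hmulVec_ext
    intro x
    rw [← mulVec_mulVec]
    exact (hidem_mem B hB _).mp (h ▸ (⟨x, rfl⟩ : A *ᵥ x ∈ LinearMap.range A.mulVecLin))
  calc A = Aᵀ := hAs.symm
  _ = (B * A)ᵀ := by rw [hBA]
  _ = Aᵀ * Bᵀ := transpose_mul _ _
  _ = A * B := by rw [hAs, hBs]
  _ = B := hAB

end Helpers

theorem stmt6 (k m : ℕ) (hk : 1 ≤ k) (p : Fin k → ℕ)
    (J : (i : Fin k) → Matrix (Fin (p i)) (Fin m) ℝ)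
    (Jst : (i : Fin (k + 1)) →
      Matrix {x : (j : Fin k) × Fin (p j) // (x.1 : ℕ) < (i : ℕ)} (Fin m) ℝ)
    (hJst : ∀ (i : Fin (k + 1)) (x) (c), Jst i x c = J x.1.1 x.1.2 c)
    (Jstp : (i : Fin (k + 1)) →
      Matrix (Fin m) {x : (j : Fin k) × Fin (p j) // (x.1 : ℕ) < (i : ℕ)} ℝ)
    (hJstp1 : ∀ i, Jst i * Jstp i * Jst i = Jst i)
    (hJstp2 : ∀ i, Jstp i * Jst i * Jstp i = Jstp i)
    (hJstp3 : ∀ i, (Jst i * Jstp i)ᵀ = Jst i * Jstp i)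
    (hJstp4 : ∀ i, (Jstp i * Jst i)ᵀ = Jstp i * Jst i)
    (N : Fin (k + 1) → Matrix (Fin m) (Fin m) ℝ)
    (hN0 : N 0 = 1)
    (hN : ∀ i : Fin (k + 1), N i = 1 - Jstp i * Jst i)
    (M : (i : Fin k) → Matrix (Fin (p i)) (Fin m) ℝ)
    (hM : ∀ i, M i = J i * N i.castSucc)
    (Mp : (i : Fin k) → Matrix (Fin m) (Fin (p i)) ℝ)
    (hMp1 : ∀ i, M i * Mp i * M i = M i)
    (hMp2 : ∀ i, Mp i * M i * Mp i = Mp i)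
    (hMp3 : ∀ i, (M i * Mp i)ᵀ = M i * Mp i)
    (hMp4 : ∀ i, (Mp i * M i)ᵀ = Mp i * M i)
    (P : Fin (k + 1) → Matrix (Fin m) (Fin m) ℝ)
    (hP : ∀ i : Fin k, P i.castSucc = Mp i * M i)
    (hPlast : P (Fin.last k) = 1 - ∑ i : Fin k, P i.castSucc) :
    ∀ i : Fin k,
      LinearMap.range (Matrix.mulVecLin (∑ j ∈ Finset.Iic i, P j.castSucc)) =
        LinearMap.range (Matrix.mulVecLin (Jst i.succ)ᵀ) ∧
      LinearMap.range (Matrix.mulVecLin (Jst i.succ)ᵀ) =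
        LinearMap.range (Matrix.mulVecLin (Jst i.castSucc)ᵀ) ⊔
          LinearMap.range (Matrix.mulVecLin (P i.castSucc)) ∧
      ∀ x ∈ LinearMap.range (Matrix.mulVecLin (Jst i.castSucc)ᵀ),
        ∀ y ∈ LinearMap.range (Matrix.mulVecLin (P i.castSucc)), x ⬝ᵥ y = 0 := by
  -- basic algebraic facts
  have hQidem : ∀ i : Fin (k + 1),
      (Jstp i * Jst i) * (Jstp i * Jst i) = Jstp i * Jst i := by
    intro i
    rw [← Matrix.mul_assoc, hJstp2]
  have hPidem : ∀ i : Fin k, (Mp i * M i) * (Mp i * M i) = Mp i * M i := by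
    intro i
    rw [← Matrix.mul_assoc, hMp2]
  have hQ0 : Jstp 0 * Jst 0 = 0 := by
    have h := (hN 0).symm.trans hN0
    exact sub_eq_self.mp h
  have hMQ : ∀ i : Fin k,
      M i * (Jstp i.castSucc * Jst i.castSucc) = 0 := by
    intro i
    rw [hM i, hN i.castSucc, Matrix.mul_assoc, sub_mul, one_mul,
      hQidem i.castSucc, sub_self, Matrix.mul_zero]
  have hPQ : ∀ i : Fin k,
      (Mp i * M i) * (Jstp i.castSucc * Jst i.castSucc) = 0 := by
    intro i
    rw [Matrix.mul_assoc, hMQ i, Matrix.mul_zero]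
  have hQP : ∀ i : Fin k,
      (Jstp i.castSucc * Jst i.castSucc) * (Mp i * M i) = 0 := by
    intro i
    have h := congrArg Matrix.transpose (hPQ i)
    rwa [transpose_mul, hJstp4, hMp4, transpose_zero] at h
  -- ranges of the projections
  have hQrange : ∀ i : Fin (k + 1),
      LinearMap.range (Jstp i * Jst i).mulVecLin =
        LinearMap.range (Jst i)ᵀ.mulVecLin :=
    fun i => hpen_range _ _ (hJstp1 i) (hJstp4 i)
  have hPrange : ∀ i : Fin k,
      LinearMap.range (Mp i * M i).mulVecLin = LinearMap.range (M i)ᵀ.mulVecLin :=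
    fun i => hpen_range _ _ (hMp1 i) (hMp4 i)
  -- rows of the stacked matrices
  have hrows : ∀ i : Fin k,
      Set.range (Jst i.succ) = Set.range (Jst i.castSucc) ∪ Set.range (J i) := by
    intro i
    ext v
    constructor
    · rintro ⟨⟨⟨a, b⟩, hab⟩, rfl⟩
      have hab' : (a : ℕ) < (i : ℕ) + 1 := by simpa using hab
      rcases lt_or_eq_of_le (Nat.lt_succ_iff.mp hab') with h | h
      · left
        refine ⟨⟨⟨a, b⟩, by simpa using h⟩, ?_⟩
        funext c
        rw [hJst, hJst]
      · right
        have ha : a = i := Fin.ext h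
        subst ha
        exact ⟨b, funext fun c => (hJst a.succ ⟨⟨a, b⟩, hab⟩ c).symm⟩
    · rintro (⟨⟨⟨a, b⟩, hab⟩, rfl⟩ | ⟨b, rfl⟩)
      · refine ⟨⟨⟨a, b⟩, by simp at hab ⊢; omega⟩, ?_⟩
        funext c
        rw [hJst, hJst]
      · refine ⟨⟨⟨i, b⟩, by simp⟩, ?_⟩
        funext c
        rw [hJst]
  have hMt : ∀ i : Fin k,
      (M i)ᵀ = (1 - Jstp i.castSucc * Jst i.castSucc) * (J i)ᵀ := by
    intro i
    rw [hM i, hN i.castSucc, transpose_mul, transpose_sub, transpose_one, hJstp4]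
  -- the key splitting of the stacked row space
  have hsplit : ∀ i : Fin k,
      LinearMap.range (Jst i.succ)ᵀ.mulVecLin =
        LinearMap.range (Jst i.castSucc)ᵀ.mulVecLin ⊔
          LinearMap.range (Mp i * M i).mulVecLin := by
    intro i
    rw [hPrange i, hMt i, ← hQrange i.castSucc, hsup_shift, hQrange i.castSucc]
    rw [Matrix.range_mulVecLin, Matrix.range_mulVecLin, Matrix.range_mulVecLin,
      Matrix.col, Matrix.col, Matrix.col, transpose_transpose, transpose_transpose, transpose_transpose,
      hrows i, Submodule.span_union]
  -- the key matrix identity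
  have hstep : ∀ i : Fin k,
      Jstp i.succ * Jst i.succ =
        Jstp i.castSucc * Jst i.castSucc + Mp i * M i := by
    intro i
    apply hproj_eq
    · exact hJstp4 i.succ
    · rw [transpose_add, hJstp4, hMp4]
    · exact hQidem i.succ
    · rw [add_mul, Matrix.mul_add, Matrix.mul_add, hQidem, hPidem, hQP i, hPQ i]
      simp
    · rw [hsum_range _ _ (hQidem i.castSucc) (hPidem i) (hQP i) (hPQ i),
        hQrange i.succ, hQrange i.castSucc]
      exact hsplit i
  -- the telescoping sum
  have hsumQ : ∀ (n : ℕ) (hn : n < k),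
      ∑ j ∈ Finset.Iic (⟨n, hn⟩ : Fin k), P j.castSucc =
        Jstp (⟨n, hn⟩ : Fin k).succ * Jst (⟨n, hn⟩ : Fin k).succ := by
    intro n
    induction n with
    | zero =>
      intro hn
      have h1 : Finset.Iic (⟨0, hn⟩ : Fin k) = {⟨0, hn⟩} := by
        ext j
        simp [Finset.mem_Iic, Fin.le_def, Fin.ext_iff, Nat.le_zero]
      rw [h1, Finset.sum_singleton, hP, hstep]
      have h0 : (⟨0, hn⟩ : Fin k).castSucc = 0 := by
        ext
        simp
      rw [h0, hQ0, zero_add]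
    | succ n ih =>
      intro hn
      have hn' : n < k := Nat.lt_of_succ_lt hn
      have hins : Finset.Iic (⟨n + 1, hn⟩ : Fin k) =
          insert (⟨n + 1, hn⟩ : Fin k) (Finset.Iic (⟨n, hn'⟩ : Fin k)) := by
        ext j
        simp only [Finset.mem_Iic, Finset.mem_insert, Fin.le_def, Fin.ext_iff]
        omega
      have hnotmem : (⟨n + 1, hn⟩ : Fin k) ∉ Finset.Iic (⟨n, hn'⟩ : Fin k) := by
        simp [Finset.mem_Iic, Fin.le_def]
      rw [hins, Finset.sum_insert hnotmem, ih hn', hP, hstep ⟨n + 1, hn⟩]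
      have he : (⟨n, hn'⟩ : Fin k).succ = (⟨n + 1, hn⟩ : Fin k).castSucc := by
        ext
        simp
      rw [he, add_comm]
  -- conclusion
  intro i
  refine ⟨?_, ?_, ?_⟩
  · obtain ⟨n, hn⟩ := i
    rw [hsumQ n hn]
    exact hQrange _
  · rw [hP i]
    exact hsplit i
  · intro x hx y hy
    rw [hP i] at hy
    obtain ⟨y', rfl⟩ := hy
    rw [← hQrange i.castSucc] at hx
    have hfix : (Jstp i.castSucc * Jst i.castSucc) *ᵥ x = x :=
      (hidem_mem _ (hQidem i.castSucc) x).mp hx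
    have h0 : (Jstp i.castSucc * Jst i.castSucc) *ᵥ ((Mp i * M i) *ᵥ y') = 0 := by
      rw [mulVec_mulVec, hQP i, zero_mulVec]
    simp only [mulVecLin_apply]
    calc x ⬝ᵥ ((Mp i * M i) *ᵥ y')
        = ((Jstp i.castSucc * Jst i.castSucc) *ᵥ x) ⬝ᵥ ((Mp i * M i) *ᵥ y') := by
          rw [hfix]
      _ = (x ᵥ* (Jstp i.castSucc * Jst i.castSucc)ᵀ) ⬝ᵥ ((Mp i * M i) *ᵥ y') := by
          rw [vecMul_transpose]
      _ = x ⬝ᵥ ((Jstp i.castSucc * Jst i.castSucc)ᵀ *ᵥ ((Mp i * M i) *ᵥ y')) :=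
          (dotProduct_mulVec _ _ _).symm
      _ = 0 := by rw [hJstp4, h0, dotProduct_zero]
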